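/- Assume in addition that h is nondecreasing. If s > (2|m|r + 2σ²εr² + h(b) + rσ²/b)/ϱ, then: k^{(s)} is nondecreasing on [0,b]; (k^{(s)})''(x) > 2r/b for every x ∈ [0,b]; β^{(s)} ≤ b/2 < b; and (k^{(s)})''(β^{(s)}) > 0. -/

import Mathlib

open Set

/-- k (with derivatives k', k'') is a C² solution on [0,b] of the Cauchy problem
k'' + (2/σ²)(m·F(k') + ½σ²ε·F(k')² − ϱ·k + h(x)) = 0, k(0) = s, k'(0) = 0. -/
def IsCauchySolution (b σ ϱ m : ℝ) (h F : ℝ → ℝ) (ε s : ℝ) (k k' k'' : ℝ → ℝ) : Prop :=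
  (∀ x ∈ Icc (0:ℝ) b, HasDerivWithinAt k (k' x) (Icc (0:ℝ) b) x) ∧
  (∀ x ∈ Icc (0:ℝ) b, HasDerivWithinAt k' (k'' x) (Icc (0:ℝ) b) x) ∧
  ContinuousOn k'' (Icc (0:ℝ) b) ∧
  (∀ x ∈ Icc (0:ℝ) b,
    k'' x + (2 / σ ^ 2) * (m * F (k' x) + (1 / 2) * σ ^ 2 * ε * (F (k' x)) ^ 2
      - ϱ * k x + h x) = 0) ∧
  k 0 = s ∧ k' 0 = 0

/-- Assume in addition that h is nondecreasing.
If s > (2|m|r + 2σ²εr² + h(b) + rσ²/b)/ϱ, then: k^{(s)} is nondecreasing on [0,b];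
(k^{(s)})''(x) > 2r/b for every x ∈ [0,b]; β^{(s)} ≤ b/2 < b; and
(k^{(s)})''(β^{(s)}) > 0, where
β^{(s)} = min(inf{x ∈ (0,b] : (k^{(s)})'(x) ≥ r}, b) (convention inf ∅ = +∞). -/
theorem stmt12 (b σ ϱ r m ε : ℝ) (hb : 0 < b) (hσ : 0 < σ) (hϱ : 0 < ϱ) (hr : 0 < r)
    (hε : 0 ≤ ε) (h F : ℝ → ℝ)
    (hLip : ∃ K : NNReal, LipschitzOnWith K h (Icc (0:ℝ) b))
    (hmono : MonotoneOn h (Icc (0:ℝ) b))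
    (hF1 : ContDiff ℝ 1 F) (hFid : ∀ z : ℝ, |z| ≤ r → F z = z)
    (hFbd : ∀ z : ℝ, |F z| ≤ 2 * r) (hF'bd : ∀ z : ℝ, |deriv F z| ≤ 1)
    (s : ℝ)
    (hs : (2 * |m| * r + 2 * σ ^ 2 * ε * r ^ 2 + h b + r * σ ^ 2 / b) / ϱ < s)
    (k k' k'' : ℝ → ℝ)
    (hsol : IsCauchySolution b σ ϱ m h F ε s k k' k'')
    (β : ℝ) (hβ : β = sInf (insert b {x : ℝ | x ∈ Ioc (0:ℝ) b ∧ r ≤ k' x})) :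
    MonotoneOn k (Icc (0:ℝ) b) ∧
    (∀ x ∈ Icc (0:ℝ) b, 2 * r / b < k'' x) ∧
    β ≤ b / 2 ∧ b / 2 < b ∧
    0 < k'' β := by
  obtain ⟨hk, hk', hk''c, hODE, hk0, hk'0⟩ := hsol
  have hσ2 : (0:ℝ) < σ ^ 2 := by positivity
  have hrb : (0:ℝ) < 2 * r / b := by positivity
  have hsϱ : 2 * |m| * r + 2 * σ ^ 2 * ε * r ^ 2 + h b + r * σ ^ 2 / b < ϱ * s := by
    rw [div_lt_iff₀ hϱ] at hs; linarith
  -- key pointwise bound: wherever s ≤ k x, the second derivative exceeds 2r/b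
  have key : ∀ x ∈ Icc (0:ℝ) b, s ≤ k x → 2 * r / b < k'' x := by
    intro x hx hkx
    have hode := hODE x hx
    have heq : k'' x = (2 / σ ^ 2) *
        (ϱ * k x - m * F (k' x) - (1 / 2) * σ ^ 2 * ε * (F (k' x)) ^ 2 - h x) := by
      linear_combination hode
    have hmF : m * F (k' x) ≤ |m| * (2 * r) := by
      calc m * F (k' x) ≤ |m * F (k' x)| := le_abs_self _
        _ = |m| * |F (k' x)| := abs_mul _ _
        _ ≤ |m| * (2 * r) := by
            exact mul_le_mul_of_nonneg_left (hFbd _) (abs_nonneg _)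
    have hF2 : (F (k' x)) ^ 2 ≤ (2 * r) ^ 2 := by
      have := hFbd (k' x)
      nlinarith [abs_nonneg (F (k' x)), sq_abs (F (k' x))]
    have hF2' : (1 / 2) * σ ^ 2 * ε * (F (k' x)) ^ 2 ≤ 2 * σ ^ 2 * ε * r ^ 2 := by
      calc (1 / 2) * σ ^ 2 * ε * (F (k' x)) ^ 2 ≤ (1 / 2) * σ ^ 2 * ε * (2 * r) ^ 2 :=
            mul_le_mul_of_nonneg_left hF2 (by positivity)
        _ = 2 * σ ^ 2 * ε * r ^ 2 := by ring
    have hhx : h x ≤ h b := hmono hx ⟨hb.le, le_rfl⟩ hx.2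
    have hks : ϱ * s ≤ ϱ * k x := mul_le_mul_of_nonneg_left hkx hϱ.le
    have h2 : r * σ ^ 2 / b <
        ϱ * k x - m * F (k' x) - (1 / 2) * σ ^ 2 * ε * (F (k' x)) ^ 2 - h x := by
      linarith
    calc 2 * r / b = (2 / σ ^ 2) * (r * σ ^ 2 / b) := by field_simp
      _ < k'' x := by rw [heq]; exact mul_lt_mul_of_pos_left h2 (by positivity)
  -- bootstrap step: if k'' > 0 on [0,d] then k' ≥ 0, k monotone and k ≥ s on [0,d]
  have hstep : ∀ d, 0 < d → d ≤ b → (∀ y ∈ Icc (0:ℝ) d, 0 < k'' y) →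
      (∀ y ∈ Icc (0:ℝ) d, 0 ≤ k' y) ∧ MonotoneOn k (Icc (0:ℝ) d) ∧
      (∀ y ∈ Icc (0:ℝ) d, s ≤ k y) := by
    intro d hd0 hdb hpos
    have hsub : Icc (0:ℝ) d ⊆ Icc (0:ℝ) b := Icc_subset_Icc le_rfl hdb
    have hderAt : ∀ y ∈ Ioo (0:ℝ) d, HasDerivAt k (k' y) y ∧ HasDerivAt k' (k'' y) y := by
      intro y hy
      have hyb : y ∈ Ioo (0:ℝ) b := ⟨hy.1, lt_of_lt_of_le hy.2 hdb⟩
      have hmem : Icc (0:ℝ) b ∈ nhds y := Icc_mem_nhds hyb.1 hyb.2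
      exact ⟨(hk y ⟨hyb.1.le, hyb.2.le⟩).hasDerivAt hmem,
        (hk' y ⟨hyb.1.le, hyb.2.le⟩).hasDerivAt hmem⟩
    have hk'mono : StrictMonoOn k' (Icc (0:ℝ) d) := by
      apply strictMonoOn_of_deriv_pos (convex_Icc 0 d)
      · exact fun y hy => ((hk' y (hsub hy)).continuousWithinAt).mono hsub
      · intro y hy
        rw [interior_Icc] at hy
        rw [(hderAt y hy).2.deriv]
        exact hpos y ⟨hy.1.le, hy.2.le⟩
    have hk'nn : ∀ y ∈ Icc (0:ℝ) d, 0 ≤ k' y := by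
      intro y hy
      rcases hy.1.eq_or_lt with h0 | h0
      · rw [← h0, hk'0]
      · have := hk'mono (left_mem_Icc.mpr hd0.le) hy h0
        rw [hk'0] at this; exact this.le
    have hkmono : MonotoneOn k (Icc (0:ℝ) d) := by
      apply monotoneOn_of_deriv_nonneg (convex_Icc 0 d)
      · exact fun y hy => ((hk y (hsub hy)).continuousWithinAt).mono hsub
      · intro y hy
        rw [interior_Icc] at hy
        exact (hderAt y hy).1.differentiableAt.differentiableWithinAt
      · intro y hy
        rw [interior_Icc] at hy
        rw [(hderAt y hy).1.deriv]
        exact hk'nn y ⟨hy.1.le, hy.2.le⟩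
    refine ⟨hk'nn, hkmono, fun y hy => ?_⟩
    calc s = k 0 := hk0.symm
      _ ≤ k y := hkmono (left_mem_Icc.mpr hd0.le) hy hy.1
  -- main invariant : s ≤ k on all of [0,b]
  have hmain : ∀ x ∈ Icc (0:ℝ) b, s ≤ k x := by
    set T := {x : ℝ | x ∈ Icc (0:ℝ) b ∧ ∀ y ∈ Icc (0:ℝ) x, s ≤ k y} with hT
    have h0T : (0:ℝ) ∈ T := by
      refine ⟨⟨le_rfl, hb.le⟩, fun y hy => ?_⟩
      have : y = 0 := le_antisymm hy.2 hy.1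
      rw [this, hk0]
    have hTne : T.Nonempty := ⟨0, h0T⟩
    have hTbdd : BddAbove T := ⟨b, fun x hx => hx.1.2⟩
    set c := sSup T with hc
    have hcb : c ≤ b := csSup_le hTne (fun x hx => hx.1.2)
    have hc0 : 0 ≤ c := le_csSup hTbdd h0T
    have hlt : ∀ y ∈ Ico (0:ℝ) c, s ≤ k y := by
      intro y hy
      obtain ⟨x, hxT, hyx⟩ := exists_lt_of_lt_csSup hTne hy.2
      exact hxT.2 y ⟨hy.1, hyx.le⟩
    have hkc : s ≤ k c := by
      rcases hc0.eq_or_lt with h0 | h0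
      · rw [← h0, hk0]
      · have hcont : ContinuousWithinAt k (Ico (0:ℝ) c) c :=
          ((hk c ⟨hc0, hcb⟩).continuousWithinAt).mono
            (fun y hy => ⟨hy.1, hy.2.le.trans hcb⟩)
        have hne : (nhdsWithin c (Ico (0:ℝ) c)).NeBot := by
          apply mem_closure_iff_nhdsWithin_neBot.mp
          rw [closure_Ico h0.ne]
          exact ⟨hc0, le_rfl⟩
        exact ge_of_tendsto hcont (eventually_nhdsWithin_of_forall hlt)
    have hcT : ∀ y ∈ Icc (0:ℝ) c, s ≤ k y := by
      intro y hy
      rcases hy.2.eq_or_lt with he | hl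
      · rw [he]; exact hkc
      · exact hlt y ⟨hy.1, hl⟩
    have hcbe : c = b := by
      by_contra hne
      have hcblt : c < b := lt_of_le_of_ne hcb hne
      have hkc'' : 0 < k'' c := lt_trans hrb (key c ⟨hc0, hcb⟩ hkc)
      have hev : ∀ᶠ y in nhdsWithin c (Icc (0:ℝ) b), 0 < k'' y :=
        (hk''c c ⟨hc0, hcb⟩).eventually (eventually_gt_nhds hkc'')
      obtain ⟨δ, hδ, hball⟩ := Metric.mem_nhdsWithin_iff.mp hev
      set d := min (c + δ / 2) b with hd
      have hcd : c < d := lt_min (by linarith) hcblt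
      have hdb : d ≤ b := min_le_right _ _
      have hd0 : 0 < d := lt_of_le_of_lt hc0 hcd
      have hpos : ∀ y ∈ Icc (0:ℝ) d, 0 < k'' y := by
        intro y hy
        rcases le_or_gt y c with hyc | hyc
        · exact lt_trans hrb (key y ⟨hy.1, hyc.trans hcb⟩ (hcT y ⟨hy.1, hyc⟩))
        · apply hball
          constructor
          · rw [Metric.mem_ball, Real.dist_eq, abs_lt]
            have : y ≤ c + δ / 2 := hy.2.trans (min_le_left _ _)
            constructor <;> linarith
          · exact ⟨hy.1, hy.2.trans hdb⟩
      have hdT : d ∈ T := ⟨⟨hd0.le, hdb⟩, (hstep d hd0 hdb hpos).2.2⟩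
      have : d ≤ c := le_csSup hTbdd hdT
      linarith
    intro x hx
    exact hcT x (by rw [hcbe]; exact hx)
  -- global consequences
  have hpos_all : ∀ x ∈ Icc (0:ℝ) b, 2 * r / b < k'' x :=
    fun x hx => key x hx (hmain x hx)
  have hpos0 : ∀ x ∈ Icc (0:ℝ) b, 0 < k'' x := fun x hx => lt_trans hrb (hpos_all x hx)
  obtain ⟨hk'nn, hkmono, -⟩ := hstep b hb le_rfl hpos0
  -- k'(b/2) ≥ r via the auxiliary function g y = k' y - (2r/b) y
  have hg : MonotoneOn (fun y => k' y - 2 * r / b * y) (Icc (0:ℝ) b) := by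
    have hderAt : ∀ y ∈ Ioo (0:ℝ) b, HasDerivAt (fun y => k' y - 2 * r / b * y)
        (k'' y - 2 * r / b) y := by
      intro y hy
      have hmem : Icc (0:ℝ) b ∈ nhds y := Icc_mem_nhds hy.1 hy.2
      have h2 : HasDerivAt (fun y : ℝ => 2 * r / b * y) (2 * r / b) y := by
        simpa using (hasDerivAt_id y).const_mul (2 * r / b)
      exact ((hk' y ⟨hy.1.le, hy.2.le⟩).hasDerivAt hmem).sub h2
    apply monotoneOn_of_deriv_nonneg (convex_Icc 0 b)
    · apply ContinuousOn.sub
      · exact fun y hy => (hk' y hy).continuousWithinAt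
      · exact (continuous_const.mul continuous_id).continuousOn
    · intro y hy
      rw [interior_Icc] at hy
      exact (hderAt y hy).differentiableAt.differentiableWithinAt
    · intro y hy
      rw [interior_Icc] at hy
      rw [(hderAt y hy).deriv]
      have := hpos_all y ⟨hy.1.le, hy.2.le⟩
      linarith
  have hb2 : b / 2 ∈ Icc (0:ℝ) b := ⟨by linarith, by linarith⟩
  have hk'b2 : r ≤ k' (b / 2) := by
    have := hg (left_mem_Icc.mpr hb.le) hb2 (by linarith)
    simp only [hk'0] at this
    have hcalc : 2 * r / b * (b / 2) = r := by field_simp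
    nlinarith [this]
  -- properties of β
  set S := {x : ℝ | x ∈ Ioc (0:ℝ) b ∧ r ≤ k' x} with hS
  have hSbdd : BddBelow (insert b S) := by
    refine ⟨0, fun x hx => ?_⟩
    rcases hx with hx | hx
    · rw [hx]; exact hb.le
    · exact hx.1.1.le
  have hβ2 : β ≤ b / 2 := by
    rw [hβ]
    apply csInf_le hSbdd
    exact Or.inr ⟨⟨by linarith, by linarith⟩, hk'b2⟩
  have hβ0 : 0 ≤ β := by
    rw [hβ]
    apply le_csInf ⟨b, Or.inl rfl⟩
    intro x hx
    rcases hx with hx | hx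
    · rw [hx]; exact hb.le
    · exact hx.1.1.le
  have hβb : β ∈ Icc (0:ℝ) b := ⟨hβ0, by linarith⟩
  exact ⟨hkmono, hpos_all, hβ2, by linarith, hpos0 β hβb⟩
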